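/- Let ℓ ≥ 4 and let q ≥ 2 be a real number. Let λ = (λ_1,…,λ_k) be a composition of ℓ−1, set m_i = λ_1+⋯+λ_{i−1}+2 and n_i = λ_1+⋯+λ_i+1 (so the blocks [m_i, n_i] partition {2,…,ℓ}), and let ε = (ε_1,…,ε_k) ∈ {+1,−1}^k. Let w_{λ,ε} : ℝ^ℓ → ℝ^ℓ be the linear map determined by w_{λ,ε}(e_1) = (∏_{i=1}^k ε_i)·e_1, w_{λ,ε}(e_j) = e_{j+1} for m_i ≤ j ≤ n_i−1, and w_{λ,ε}(e_{n_i}) = ε_i·e_{m_i}, for each 1 ≤ i ≤ k. Let δ : ℝ^ℓ → ℝ^ℓ be one of: the identity; the map s_1 swapping e_1 and e_2 and fixing all other e_j; or the map t' with t'(e_1) = −e_2, t'(e_2) = −e_1, fixing all other e_j. Set w = δ ∘ w_{λ,ε}. Then there exists x = (x_1,…,x_ℓ) ∈ ℝ^ℓ with x_1 > x_2 > ⋯ > x_ℓ > 0 such that ⟨qx − wx, e_1 + e_2⟩ > 0 and ⟨qx − wx, e_i − e_{i+1}⟩ > 0 for all 1 ≤ i ≤ ℓ−1. -/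

import Mathlib

open scoped RealInnerProductSpace

/-- The standard basis vector `e_j` (1-based) of `ℝ^ℓ`; zero for out-of-range indices. -/
noncomputable def E (ℓ : ℕ) (j : ℕ) : EuclideanSpace ℝ (Fin ℓ) :=
  if h : 1 ≤ j ∧ j ≤ ℓ then EuclideanSpace.single (⟨j - 1, by omega⟩ : Fin ℓ) (1 : ℝ) else 0

/-- The vector `(x_1, …, x_ℓ) ∈ ℝ^ℓ` built from a (1-based) sequence of reals. -/
noncomputable def vec (ℓ : ℕ) (x : ℕ → ℝ) : EuclideanSpace ℝ (Fin ℓ) :=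
  WithLp.toLp 2 (fun i : Fin ℓ => x (i.1 + 1))

lemma E_apply (ℓ j : ℕ) (h1 : 1 ≤ j) (h2 : j ≤ ℓ) (i : Fin ℓ) :
    E ℓ j i = if i.1 + 1 = j then 1 else 0 := by
  rw [E, dif_pos ⟨h1, h2⟩, EuclideanSpace.single_apply]
  have hi : (i : ℕ) < ℓ := i.2
  by_cases h : i.1 + 1 = j
  · rw [if_pos (Fin.eq_mk_iff_val_eq.mpr (by omega)), if_pos h]
  · rw [if_neg (fun hh => h (by have := Fin.eq_mk_iff_val_eq.mp hh; omega)), if_neg h]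

lemma vec_sum (ℓ : ℕ) (x : ℕ → ℝ) : vec ℓ x = ∑ j ∈ Finset.Icc 1 ℓ, x j • E ℓ j := by
  ext i
  rw [WithLp.ofLp_sum, Finset.sum_apply i _ (fun j => (x j • E ℓ j).ofLp)]
  have h1 : ∀ j ∈ Finset.Icc 1 ℓ, (x j • E ℓ j) i = if i.1 + 1 = j then x j else 0 := by
    intro j hj
    rw [Finset.mem_Icc] at hj
    have : (x j • E ℓ j) i = x j * E ℓ j i := rfl
    rw [this, E_apply ℓ j hj.1 hj.2]
    split <;> simp
  rw [Finset.sum_congr rfl h1, Finset.sum_ite_eq]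
  rw [if_pos (by rw [Finset.mem_Icc]; omega : i.1 + 1 ∈ Finset.Icc 1 ℓ)]
  rfl

lemma inner_vec_E (ℓ c : ℕ) (h1 : 1 ≤ c) (h2 : c ≤ ℓ) (z : ℕ → ℝ) :
    ⟪vec ℓ z, E ℓ c⟫ = z c := by
  rw [E, dif_pos ⟨h1, h2⟩, EuclideanSpace.inner_single_right]
  have : (vec ℓ z) (⟨c - 1, by omega⟩ : Fin ℓ) = z c := by
    show z (c - 1 + 1) = z c
    congr 1; omega
  simp [this]

lemma rep (ℓ : ℕ) (f : EuclideanSpace ℝ (Fin ℓ) →ₗ[ℝ] EuclideanSpace ℝ (Fin ℓ))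
    (g p : ℕ → ℕ) (s Y x : ℕ → ℝ)
    (hf : ∀ j, 1 ≤ j → j ≤ ℓ → f (E ℓ j) = s j • E ℓ (g j))
    (hg : ∀ j, 1 ≤ j → j ≤ ℓ → 1 ≤ g j ∧ g j ≤ ℓ)
    (hp1 : ∀ c, 1 ≤ c → c ≤ ℓ → (1 ≤ p c ∧ p c ≤ ℓ) ∧ g (p c) = c)
    (hp2 : ∀ j, 1 ≤ j → j ≤ ℓ → ∀ c, 1 ≤ c → c ≤ ℓ → g j = c → j = p c)
    (hY : ∀ c, 1 ≤ c → c ≤ ℓ → Y c = s (p c) * x (p c)) :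
    f (vec ℓ x) = vec ℓ Y := by
  rw [vec_sum ℓ x, map_sum]
  ext i
  rw [WithLp.ofLp_sum, Finset.sum_apply i _ (fun j => (f (x j • E ℓ j)).ofLp)]
  have hi : (i : ℕ) < ℓ := i.2
  have hc1 : 1 ≤ i.1 + 1 := by omega
  have hc2 : i.1 + 1 ≤ ℓ := i.2
  have h1 : ∀ j ∈ Finset.Icc 1 ℓ, (f (x j • E ℓ j)) i
      = if j = p (i.1 + 1) then s (p (i.1 + 1)) * x (p (i.1 + 1)) else 0 := by
    intro j hj
    rw [Finset.mem_Icc] at hj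
    rw [map_smul, hf j hj.1 hj.2]
    have h2 : (x j • s j • E ℓ (g j)) i = x j * (s j * E ℓ (g j) i) := rfl
    rw [h2, E_apply ℓ (g j) (hg j hj.1 hj.2).1 (hg j hj.1 hj.2).2]
    by_cases hgj : g j = i.1 + 1
    · have hj0 : j = p (i.1 + 1) := hp2 j hj.1 hj.2 (i.1 + 1) hc1 hc2 hgj
      rw [if_pos (by omega), if_pos hj0]
      rw [hj0]; ring
    · rw [if_neg (by omega), if_neg (fun h => hgj (by rw [h]; exact (hp1 (i.1+1) hc1 hc2).2))]
      ring
  rw [Finset.sum_congr rfl h1, Finset.sum_ite_eq']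
  rw [if_pos (by rw [Finset.mem_Icc]; exact (hp1 (i.1+1) hc1 hc2).1 : p (i.1 + 1) ∈ Finset.Icc 1 ℓ)]
  exact (hY (i.1+1) hc1 hc2).symm

def Ssum (lam : ℕ → ℕ) (i : ℕ) : ℕ := ∑ t ∈ Finset.Icc 1 i, lam t

def blk (lam : ℕ → ℕ) (k c : ℕ) : ℕ :=
  Nat.findGreatest (fun i => Ssum lam i + 1 < c) k + 1

lemma Ssum_zero (lam : ℕ → ℕ) : Ssum lam 0 = 0 := by simp [Ssum]

lemma Ssum_succ (lam : ℕ → ℕ) (i : ℕ) : Ssum lam (i + 1) = Ssum lam i + lam (i + 1) := by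
  rw [Ssum, Ssum]
  exact Finset.sum_Icc_succ_top (by omega) lam

lemma Ssum_mono (lam : ℕ → ℕ) {i j : ℕ} (h : i ≤ j) : Ssum lam i ≤ Ssum lam j := by
  induction j with
  | zero =>
    have : i = 0 := by omega
    rw [this]
  | succ n ih =>
    rcases Nat.lt_or_ge i (n + 1) with h' | h'
    · rw [Ssum_succ]
      have := ih (by omega)
      omega
    · have : i = n + 1 := by omega
      rw [this]

lemma Ssum_strict (lam : ℕ → ℕ) (k : ℕ) (hlam : ∀ i, 1 ≤ i → i ≤ k → 1 ≤ lam i)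
    {i j : ℕ} (h : i < j) (hj : j ≤ k) : Ssum lam i < Ssum lam j := by
  have h1 : Ssum lam (i + 1) = Ssum lam i + lam (i + 1) := Ssum_succ lam i
  have h2 : 1 ≤ lam (i + 1) := hlam (i + 1) (by omega) (by omega)
  have h3 : Ssum lam (i + 1) ≤ Ssum lam j := Ssum_mono lam (by omega)
  omega

/-- Block membership of `blk`. -/
lemma blk_spec (lam : ℕ → ℕ) (k c ℓ : ℕ) (hk : 1 ≤ k)
    (hlam : ∀ i, 1 ≤ i → i ≤ k → 1 ≤ lam i) (hsum : Ssum lam k = ℓ - 1) (hℓ : 2 ≤ ℓ)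
    (hc1 : 2 ≤ c) (hc2 : c ≤ ℓ) :
    1 ≤ blk lam k c ∧ blk lam k c ≤ k ∧
      Ssum lam (blk lam k c - 1) + 2 ≤ c ∧ c ≤ Ssum lam (blk lam k c) + 1 := by
  have hPk : ¬ (Ssum lam k + 1 < c) := by omega
  have hmk : Nat.findGreatest (fun i => Ssum lam i + 1 < c) k ≤ k := Nat.findGreatest_le k
  have hmlt : Nat.findGreatest (fun i => Ssum lam i + 1 < c) k < k := by
    rcases eq_or_lt_of_le hmk with h | h
    · exact absurd (Nat.findGreatest_of_ne_zero h (by omega)) hPk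
    · exact h
  have hub : ¬ (Ssum lam (Nat.findGreatest (fun i => Ssum lam i + 1 < c) k + 1) + 1 < c) :=
    Nat.findGreatest_is_greatest (P := fun i => Ssum lam i + 1 < c) (n := k) (by omega) (by omega)
  have hlb : Ssum lam (Nat.findGreatest (fun i => Ssum lam i + 1 < c) k) + 2 ≤ c := by
    rcases Nat.eq_zero_or_pos (Nat.findGreatest (fun i => Ssum lam i + 1 < c) k) with h0 | h0
    · rw [h0, Ssum_zero]; omega
    · have h0' : Nat.findGreatest (fun i => Ssum lam i + 1 < c) k ≠ 0 := by omega
      have hP : Ssum lam (Nat.findGreatest (fun i => Ssum lam i + 1 < c) k) + 1 < c :=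
        Nat.findGreatest_of_ne_zero (P := fun i => Ssum lam i + 1 < c) (n := k) rfl h0'
      omega
  simp only [blk]
  refine ⟨by omega, by omega, by simpa using hlb, by omega⟩

/-- Uniqueness: if `c` lies in block `b` then `blk c = b`. -/
lemma blk_eq (lam : ℕ → ℕ) (k c ℓ : ℕ) (hk : 1 ≤ k)
    (hlam : ∀ i, 1 ≤ i → i ≤ k → 1 ≤ lam i) (hsum : Ssum lam k = ℓ - 1) (hℓ : 2 ≤ ℓ)
    (hc1 : 2 ≤ c) (hc2 : c ≤ ℓ) (b : ℕ) (hb1 : 1 ≤ b) (_hb2 : b ≤ k)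
    (hm : Ssum lam (b - 1) + 2 ≤ c) (hn : c ≤ Ssum lam b + 1) :
    blk lam k c = b := by
  obtain ⟨h1, h2, h3, h4⟩ := blk_spec lam k c ℓ hk hlam hsum hℓ hc1 hc2
  set b' := blk lam k c
  by_contra hne
  rcases Nat.lt_or_ge b' b with h | h
  · have : Ssum lam b' ≤ Ssum lam (b - 1) := Ssum_mono lam (by omega)
    omega
  · have hlt : b < b' := by omega
    have : Ssum lam b ≤ Ssum lam (b' - 1) := Ssum_mono lam (by omega)
    omega

lemma Ssum_one (lam : ℕ → ℕ) : Ssum lam 1 = lam 1 := by simp [Ssum]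

lemma blk_ge_one (lam : ℕ → ℕ) (k c : ℕ) : 1 ≤ blk lam k c := Nat.le_add_left 1 _

set_option maxHeartbeats 16000000 in
/-- type `D_ℓ`. For a composition `λ` of `ℓ-1`, signs `ε_i ∈ {±1}`, the
even-signed block-cycle element `w_{λ,ε}` (on the blocks `[m_i, n_i]` partitioning `{2,…,ℓ}`,
with `w_{λ,ε}(e_1) = (∏_i ε_i)·e_1`), and `δ ∈ {id, s_1, t'}`, setting `w = δ ∘ w_{λ,ε}`,
there exists `x_1 > ⋯ > x_ℓ > 0` with `⟨qx - wx, e_1 + e_2⟩ > 0` and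
`⟨qx - wx, e_i - e_{i+1}⟩ > 0` for all `1 ≤ i ≤ ℓ-1`. -/
theorem stmt_9 (ℓ : ℕ) (hℓ : 4 ≤ ℓ) (q : ℝ) (hq : 2 ≤ q)
    (k : ℕ) (hk : 1 ≤ k) (lam : ℕ → ℕ)
    (hlam : ∀ i, 1 ≤ i → i ≤ k → 1 ≤ lam i)
    (hsum : ∑ j ∈ Finset.Icc 1 k, lam j = ℓ - 1)
    (eps : ℕ → ℝ) (heps : ∀ i, 1 ≤ i → i ≤ k → eps i = 1 ∨ eps i = -1)
    (wle : EuclideanSpace ℝ (Fin ℓ) →ₗ[ℝ] EuclideanSpace ℝ (Fin ℓ))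
    (hwle1 : wle (E ℓ 1) = (∏ i ∈ Finset.Icc 1 k, eps i) • E ℓ 1)
    (hwle : ∀ i, 1 ≤ i → i ≤ k →
      (∀ j, (∑ t ∈ Finset.Icc 1 (i - 1), lam t) + 2 ≤ j →
          j + 1 ≤ (∑ t ∈ Finset.Icc 1 i, lam t) + 1 → wle (E ℓ j) = E ℓ (j + 1)) ∧
      wle (E ℓ ((∑ t ∈ Finset.Icc 1 i, lam t) + 1))
        = eps i • E ℓ ((∑ t ∈ Finset.Icc 1 (i - 1), lam t) + 2))
    (δ : EuclideanSpace ℝ (Fin ℓ) →ₗ[ℝ] EuclideanSpace ℝ (Fin ℓ))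
    (hδ : (∀ j, 1 ≤ j → j ≤ ℓ → δ (E ℓ j) = E ℓ j) ∨
      (δ (E ℓ 1) = E ℓ 2 ∧ δ (E ℓ 2) = E ℓ 1 ∧
        ∀ j, 3 ≤ j → j ≤ ℓ → δ (E ℓ j) = E ℓ j) ∨
      (δ (E ℓ 1) = -E ℓ 2 ∧ δ (E ℓ 2) = -E ℓ 1 ∧
        ∀ j, 3 ≤ j → j ≤ ℓ → δ (E ℓ j) = E ℓ j)) :
    ∃ x : ℕ → ℝ,
      (∀ j, 1 ≤ j → j < ℓ → x (j + 1) < x j) ∧ 0 < x ℓ ∧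
      0 < ⟪q • vec ℓ x - δ (wle (vec ℓ x)), E ℓ 1 + E ℓ 2⟫ ∧
      (∀ i, 1 ≤ i → i + 1 ≤ ℓ →
        0 < ⟪q • vec ℓ x - δ (wle (vec ℓ x)), E ℓ i - E ℓ (i + 1)⟫) := by
  classical
  have hℓ2 : 2 ≤ ℓ := by omega
  have hq0 : (0:ℝ) < q := by linarith
  have hsum' : Ssum lam k = ℓ - 1 := hsum
  -- unify δ into (u, pδ) form
  obtain ⟨u, pδ, hcase, hδ1, hδ2, hδ3⟩ :
      ∃ u : ℝ, ∃ pδ : ℕ, ((u = 1 ∧ pδ = 1) ∨ (u = 1 ∧ pδ = 2) ∨ (u = -1 ∧ pδ = 2)) ∧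
        δ (E ℓ 1) = u • E ℓ pδ ∧ δ (E ℓ 2) = u • E ℓ (3 - pδ) ∧
        (∀ j, 3 ≤ j → j ≤ ℓ → δ (E ℓ j) = E ℓ j) := by
    rcases hδ with h | ⟨h1, h2, h3⟩ | ⟨h1, h2, h3⟩
    · refine ⟨1, 1, Or.inl ⟨rfl, rfl⟩, ?_, ?_, fun j hj1 hj2 => h j (by omega) hj2⟩
      · rw [one_smul]; exact h 1 le_rfl (by omega)
      · show δ (E ℓ 2) = (1:ℝ) • E ℓ (3 - 1)
        norm_num
        exact h 2 (by omega) hℓ2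
    · refine ⟨1, 2, Or.inr (Or.inl ⟨rfl, rfl⟩), by rw [one_smul]; exact h1, ?_, h3⟩
      show δ (E ℓ 2) = (1:ℝ) • E ℓ (3 - 2)
      norm_num
      exact h2
    · refine ⟨-1, 2, Or.inr (Or.inr ⟨rfl, rfl⟩), by rw [neg_one_smul]; exact h1, ?_, h3⟩
      show δ (E ℓ 2) = (-1:ℝ) • E ℓ (3 - 2)
      rw [neg_one_smul]
      norm_num
      exact h2
  have hpδ12 : pδ = 1 ∨ pδ = 2 := by
    rcases hcase with h|h|h
    exacts [Or.inl h.2, Or.inr h.2, Or.inr h.2]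
  have hu1 : u = 1 ∨ u = -1 := by
    rcases hcase with h|h|h
    exacts [Or.inl h.1, Or.inl h.1, Or.inr h.1]
  have hu1of : pδ = 1 → u = 1 := by
    intro h
    rcases hcase with ⟨ha,hb⟩|⟨ha,hb⟩|⟨ha,hb⟩
    · exact ha
    · exfalso; omega
    · exfalso; omega
  -- sign product
  obtain ⟨Pi, hPidef⟩ : ∃ a : ℝ, a = ∏ i ∈ Finset.Icc 1 k, eps i := ⟨_, rfl⟩
  rw [← hPidef] at hwle1
  have hPi1 : Pi = 1 ∨ Pi = -1 := by
    rw [hPidef]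
    refine Finset.prod_induction eps (fun a => a = 1 ∨ a = -1) ?_ (Or.inl rfl) ?_
    · rintro a b (ha|ha) (hb|hb) <;> rw [ha, hb] <;> norm_num
    · intro i hi
      rw [Finset.mem_Icc] at hi
      exact heps i hi.1 hi.2
  have heps' : ∀ i, 1 ≤ i → i ≤ k → -1 ≤ eps i ∧ eps i ≤ 1 := by
    intro i h1 h2
    rcases heps i h1 h2 with h|h <;> rw [h] <;> norm_num
  have hsp12 : u * Pi = 1 ∨ u * Pi = -1 := by
    rcases hu1 with h|h <;> rcases hPi1 with h'|h' <;> rw [h, h'] <;> norm_num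
  -- the scale constants
  obtain ⟨t, htdef⟩ : ∃ a : ℝ, a = (3/4:ℝ)^ℓ / (4*(q+1)) := ⟨_, rfl⟩
  have hRpos : ∀ m : ℕ, (0:ℝ) < (3/4:ℝ)^m := fun m => pow_pos (by norm_num) m
  have hRle : ∀ m n : ℕ, m ≤ n → (3/4:ℝ)^n ≤ (3/4:ℝ)^m := by
    intro m n h
    exact pow_le_pow_of_le_one (by norm_num) (by norm_num) h
  have hRle1 : ∀ m : ℕ, (3/4:ℝ)^m ≤ 1 := by
    intro m
    have := hRle 0 m (Nat.zero_le m)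
    simpa using this
  have ht0 : 0 < t := by rw [htdef]; positivity
  have hKmain : (q+1) * t ≤ 1/4 := by
    have h4 : (q+1) * t = (3/4:ℝ)^ℓ / 4 := by
      rw [htdef]
      field_simp
    rw [h4]
    linarith [hRle1 ℓ]
  have ht112 : t ≤ 1/12 := by nlinarith [hKmain, ht0, mul_nonneg (by linarith : (0:ℝ) ≤ q - 2) ht0.le]
  have htR : t * (3/4) < 1 := by linarith
  have hK1 : (q+1) * (t * (3/4)) < (3/4) * q - 1 := by nlinarith [hKmain]
  have hK2 : (q+1) * (t * (3/4)) < (7/8) * q - 1 := by nlinarith [hKmain]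
  -- block helper facts
  have hS0 : Ssum lam 0 = 0 := Ssum_zero lam
  have hS1l : 1 ≤ Ssum lam 1 := by rw [Ssum_one]; exact hlam 1 le_rfl hk
  have hSub : ∀ b, b ≤ k → Ssum lam b + 1 ≤ ℓ := by
    intro b h
    have := Ssum_mono lam h
    omega
  have hSb : ∀ b, 1 ≤ b → b ≤ k → Ssum lam (b-1) + 1 ≤ Ssum lam b := by
    intro b h1 h2
    have := Ssum_strict lam k hlam (show b-1 < b by omega) h2
    omega
  have be : ∀ c, 2 ≤ c → c ≤ ℓ → ∀ b, 1 ≤ b → b ≤ k →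
      Ssum lam (b-1) + 2 ≤ c → c ≤ Ssum lam b + 1 → blk lam k c = b :=
    fun c hc1 hc2 b hb1 hb2 hm hn => blk_eq lam k c ℓ hk hlam hsum' hℓ2 hc1 hc2 b hb1 hb2 hm hn
  have bs : ∀ c, 2 ≤ c → c ≤ ℓ → (1 ≤ blk lam k c ∧ blk lam k c ≤ k ∧
      Ssum lam (blk lam k c - 1) + 2 ≤ c ∧ c ≤ Ssum lam (blk lam k c) + 1) :=
    fun c hc1 hc2 => blk_spec lam k c ℓ hk hlam hsum' hℓ2 hc1 hc2
  have hblk_n : ∀ b, 1 ≤ b → b ≤ k → blk lam k (Ssum lam b + 1) = b := by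
    intro b h1 h2
    have h3 := hSb b h1 h2
    exact be _ (by omega) (hSub b h2) b h1 h2 (by omega) le_rfl
  have hblk2 : blk lam k 2 = 1 := by
    refine be 2 le_rfl hℓ2 1 le_rfl hk ?_ (by rw [Ssum_one]; have := hlam 1 le_rfl hk; omega)
    rw [show (1:ℕ) - 1 = 0 from rfl, hS0]
  have hc3of : ∀ c, 2 ≤ c → c ≤ ℓ → c ≠ Ssum lam (blk lam k c - 1) + 2 → 3 ≤ c := by
    intro c h2 hl hm
    rcases Nat.lt_or_ge c 3 with h|h
    · exfalso
      apply hm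
      have hcv : c = 2 := by omega
      rw [hcv, hblk2]
      simp [hS0]
    · exact h
  have hbprev : ∀ c, 2 ≤ c → c ≤ ℓ → c ≠ Ssum lam (blk lam k c - 1) + 2 →
      blk lam k (c-1) = blk lam k c ∧ 3 ≤ c := by
    intro c h2 hl hm
    obtain ⟨hb1, hb2, hb3, hb4⟩ := bs c h2 hl
    have hc3 := hc3of c h2 hl hm
    exact ⟨be (c-1) (by omega) (by omega) _ hb1 hb2 (by omega) (by omega), hc3⟩
  have hbdry : ∀ j, 2 ≤ j → j + 1 ≤ ℓ → j = Ssum lam (blk lam k j) + 1 →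
      blk lam k j < k ∧ blk lam k (j+1) = blk lam k j + 1 ∧
        Ssum lam (blk lam k j) + 1 ≤ Ssum lam (blk lam k j + 1) := by
    intro j h2 hj1 hn
    obtain ⟨hb1, hb2, hb3, hb4⟩ := bs j h2 (by omega)
    have hlt : blk lam k j < k := by
      rcases Nat.lt_or_ge (blk lam k j) k with h|h
      · exact h
      · exfalso
        have hcv : blk lam k j = k := by omega
        rw [hcv] at hn
        omega
    have hs := hSb (blk lam k j + 1) (by omega) hlt
    simp only [Nat.add_sub_cancel] at hs
    refine ⟨hlt, ?_, by omega⟩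
    refine be (j+1) (by omega) hj1 _ (by omega) hlt ?_ (by omega)
    simp only [Nat.add_sub_cancel]
    omega
  have hsame : ∀ j, 2 ≤ j → j + 1 ≤ ℓ → j ≠ Ssum lam (blk lam k j) + 1 →
      blk lam k (j+1) = blk lam k j := by
    intro j h2 hj1 hn
    obtain ⟨hb1, hb2, hb3, hb4⟩ := bs j h2 (by omega)
    exact be (j+1) (by omega) hj1 _ hb1 hb2 (by omega) (by omega)
  -- the vector x
  obtain ⟨X1, hX1def⟩ : ∃ a : ℝ, a = if pδ = 2 ∧ u * Pi = 1 then (1 + q/8) * (t * (9/16)) else (q+2) * t := ⟨_, rfl⟩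
  obtain ⟨xv, hxdef⟩ : ∃ f : ℕ → ℝ, f = fun j => if j = 1 then X1 else t ^ blk lam k j * (3/4:ℝ)^j := ⟨_, rfl⟩
  have hx1v : xv 1 = X1 := by rw [hxdef]; norm_num
  have hX1sp : (pδ = 2 ∧ u * Pi = 1) → X1 = (1 + q/8) * (t * (9/16)) := by
    intro h; rw [hX1def, if_pos h]
  have hX1ns : ¬(pδ = 2 ∧ u * Pi = 1) → X1 = (q+2) * t := by
    intro h; rw [hX1def, if_neg h]
  have hX1pos : 0 < X1 := by
    by_cases h : pδ = 2 ∧ u * Pi = 1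
    · rw [hX1sp h]; nlinarith [ht0, mul_pos hq0 ht0]
    · rw [hX1ns h]; nlinarith [ht0, mul_pos hq0 ht0]
  have hxv : ∀ c, c ≠ 1 → xv c = t ^ blk lam k c * (3/4:ℝ)^c := by
    intro c hc; simp only [hxdef]; rw [if_neg hc]
  have hxpos2 : ∀ c, 2 ≤ c → 0 < xv c := by
    intro c hc
    rw [hxv c (by omega)]
    exact mul_pos (pow_pos ht0 _) (hRpos c)
  have hx2v : xv 2 = t * (9/16) := by
    rw [hxv 2 (by omega), hblk2, pow_one]
    norm_num
  have hx2pos : 0 < xv 2 := hxpos2 2 le_rfl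
  have hxle : ∀ c, 2 ≤ c → xv c ≤ t * (9/16) := by
    intro c hc
    rw [hxv c (by omega)]
    have hb1 : 1 ≤ blk lam k c := blk_ge_one lam k c
    calc t ^ blk lam k c * (3/4:ℝ)^c ≤ t^1 * (3/4:ℝ)^2 := by
          apply mul_le_mul (pow_le_pow_of_le_one ht0.le (by linarith) hb1) (hRle 2 c hc)
            (hRpos c).le (pow_pos ht0 1).le
      _ = t * (9/16) := by rw [pow_one]; norm_num
  have hstep : ∀ j, 2 ≤ j → j + 1 ≤ ℓ → xv (j+1) < xv j := by
    intro j h2 hj1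
    rw [hxv j (by omega), hxv (j+1) (by omega)]
    by_cases hn : j = Ssum lam (blk lam k j) + 1
    · obtain ⟨-, hbk, -⟩ := hbdry j h2 hj1 hn
      rw [hbk, pow_succ, pow_succ]
      have h1 : 0 < t ^ blk lam k j * (3/4:ℝ)^j := mul_pos (pow_pos ht0 _) (hRpos j)
      nlinarith [mul_pos h1 (show (0:ℝ) < 1 - t*(3/4) by linarith [htR])]
    · rw [hsame j h2 hj1 hn, pow_succ]
      have h1 : 0 < t ^ blk lam k j * (3/4:ℝ)^j := mul_pos (pow_pos ht0 _) (hRpos j)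
      nlinarith [h1]
  have hanti : ∀ a c, 2 ≤ a → a ≤ c → c ≤ ℓ → xv c ≤ xv a := by
    intro a c ha hac hcl
    induction c with
    | zero => omega
    | succ n ih =>
      rcases Nat.lt_or_ge a (n+1) with h | h
      · have h2 : xv n ≤ xv a := ih (by omega) (by omega)
        have h3 := hstep n (by omega) (by omega)
        linarith
      · have : a = n + 1 := by omega
        rw [this]
  -- data of w_{λ,ε} as signed permutation
  obtain ⟨g0, hg0def⟩ : ∃ f : ℕ → ℕ, f = fun j => if j = 1 then 1 else
      if j = Ssum lam (blk lam k j) + 1 then Ssum lam (blk lam k j - 1) + 2 else j + 1 := ⟨_, rfl⟩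
  obtain ⟨s0, hs0def⟩ : ∃ f : ℕ → ℝ, f = fun j => if j = 1 then Pi else
      if j = Ssum lam (blk lam k j) + 1 then eps (blk lam k j) else 1 := ⟨_, rfl⟩
  obtain ⟨p0, hp0def⟩ : ∃ f : ℕ → ℕ, f = fun c => if c = 1 then 1 else
      if c = Ssum lam (blk lam k c - 1) + 2 then Ssum lam (blk lam k c) + 1 else c - 1 := ⟨_, rfl⟩
  obtain ⟨Y0v, hY0def⟩ : ∃ f : ℕ → ℝ, f = fun c => if c = 1 then Pi * xv 1 else
      if c = Ssum lam (blk lam k c - 1) + 2 then eps (blk lam k c) * xv (Ssum lam (blk lam k c) + 1)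
      else xv (c - 1) := ⟨_, rfl⟩
  have hf0 : ∀ j, 1 ≤ j → j ≤ ℓ → wle (E ℓ j) = s0 j • E ℓ (g0 j) := by
    intro j h1 h2
    simp only [hg0def, hs0def]
    by_cases hj : j = 1
    · subst hj
      norm_num
      exact hwle1
    · obtain ⟨hb1, hb2, hb3, hb4⟩ := bs j (by omega) h2
      by_cases hn : j = Ssum lam (blk lam k j) + 1
      · rw [if_neg hj, if_neg hj, if_pos hn, if_pos hn]
        nth_rewrite 1 [hn]
        exact (hwle (blk lam k j) hb1 hb2).2
      · rw [if_neg hj, if_neg hj, if_neg hn, if_neg hn, one_smul]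
        exact (hwle (blk lam k j) hb1 hb2).1 j hb3 (by show j + 1 ≤ Ssum lam (blk lam k j) + 1; omega)
  have hg0rng : ∀ j, 1 ≤ j → j ≤ ℓ → 1 ≤ g0 j ∧ g0 j ≤ ℓ := by
    intro j h1 h2
    simp only [hg0def]
    by_cases hj : j = 1
    · rw [if_pos hj]; omega
    · obtain ⟨hb1, hb2, hb3, hb4⟩ := bs j (by omega) h2
      by_cases hn : j = Ssum lam (blk lam k j) + 1
      · rw [if_neg hj, if_pos hn]; omega
      · rw [if_neg hj, if_neg hn]
        have := hSub (blk lam k j) hb2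
        omega
  have hp01 : ∀ c, 1 ≤ c → c ≤ ℓ → (1 ≤ p0 c ∧ p0 c ≤ ℓ) ∧ g0 (p0 c) = c := by
    intro c h1 h2
    simp only [hp0def, hg0def]
    by_cases hc : c = 1
    · subst hc; norm_num; omega
    · obtain ⟨hb1, hb2, hb3, hb4⟩ := bs c (by omega) h2
      by_cases hm : c = Ssum lam (blk lam k c - 1) + 2
      · rw [if_neg hc, if_pos hm]
        have h3 := hSb (blk lam k c) hb1 hb2
        have h4 := hSub (blk lam k c) hb2
        have hbn := hblk_n (blk lam k c) hb1 hb2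
        refine ⟨⟨by omega, by omega⟩, ?_⟩
        rw [if_neg (by omega), hbn, if_pos rfl]
        omega
      · rw [if_neg hc, if_neg hm]
        obtain ⟨hbp, hc3⟩ := hbprev c (by omega) h2 hm
        refine ⟨⟨by omega, by omega⟩, ?_⟩
        rw [if_neg (by omega), hbp, if_neg (by omega)]
        omega
  have hp02 : ∀ j, 1 ≤ j → j ≤ ℓ → ∀ c, 1 ≤ c → c ≤ ℓ → g0 j = c → j = p0 c := by
    intro j hj1 hj2 c hc1 hc2 hgj
    simp only [hg0def] at hgj
    simp only [hp0def]
    by_cases hj : j = 1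
    · rw [if_pos hj] at hgj
      rw [if_pos (by omega)]
      omega
    · obtain ⟨hb1, hb2, hb3, hb4⟩ := bs j (by omega) hj2
      rw [if_neg hj] at hgj
      by_cases hn : j = Ssum lam (blk lam k j) + 1
      · rw [if_pos hn] at hgj
        have h3 := hSb (blk lam k j) hb1 hb2
        have hbc : blk lam k c = blk lam k j :=
          be c (by omega) hc2 _ hb1 hb2 (by omega) (by omega)
        rw [if_neg (by omega), hbc, if_pos (by omega)]
        omega
      · rw [if_neg hn] at hgj
        have hbc : blk lam k c = blk lam k j :=
          be c (by omega) hc2 _ hb1 hb2 (by omega) (by omega)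
        rw [if_neg (by omega), hbc, if_neg (by omega)]
        omega
  have hY0eval : ∀ c, 1 ≤ c → c ≤ ℓ → Y0v c = s0 (p0 c) * xv (p0 c) := by
    intro c h1 h2
    simp only [hY0def, hp0def, hs0def]
    by_cases hc : c = 1
    · subst hc; norm_num
    · obtain ⟨hb1, hb2, hb3, hb4⟩ := bs c (by omega) h2
      by_cases hm : c = Ssum lam (blk lam k c - 1) + 2
      · rw [if_neg hc, if_pos hm, if_neg hc, if_pos hm]
        have h3 := hSb (blk lam k c) hb1 hb2
        have hbn := hblk_n (blk lam k c) hb1 hb2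
        rw [if_neg (by omega), hbn, if_pos rfl]
      · rw [if_neg hc, if_neg hm, if_neg hc, if_neg hm]
        obtain ⟨hbp, hc3⟩ := hbprev c (by omega) h2 hm
        rw [if_neg (by omega), hbp, if_neg (by omega), one_mul]
  have hw0 : wle (vec ℓ xv) = vec ℓ Y0v :=
    rep ℓ wle g0 p0 s0 Y0v xv hf0 hg0rng hp01 hp02 hY0eval
  -- δ as signed permutation
  obtain ⟨gd, hgddef⟩ : ∃ f : ℕ → ℕ, f = fun j => if j = 1 then pδ else if j = 2 then 3 - pδ else j := ⟨_, rfl⟩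
  obtain ⟨sd, hsddef⟩ : ∃ f : ℕ → ℝ, f = fun j => if j = 1 then u else if j = 2 then u else 1 := ⟨_, rfl⟩
  obtain ⟨Yfv, hYfdef⟩ : ∃ f : ℕ → ℝ, f = fun c => sd (gd c) * Y0v (gd c) := ⟨_, rfl⟩
  have hfd : ∀ j, 1 ≤ j → j ≤ ℓ → δ (E ℓ j) = sd j • E ℓ (gd j) := by
    intro j h1 h2
    simp only [hgddef, hsddef]
    by_cases hj1 : j = 1
    · subst hj1; norm_num; exact hδ1
    · by_cases hj2 : j = 2
      · subst hj2; norm_num; exact hδ2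
      · rw [if_neg hj1, if_neg hj2, if_neg hj1, if_neg hj2, one_smul]
        exact hδ3 j (by omega) h2
  have hgd_rng : ∀ j, 1 ≤ j → j ≤ ℓ → 1 ≤ gd j ∧ gd j ≤ ℓ := by
    intro j h1 h2
    simp only [hgddef]
    rcases hpδ12 with h|h <;> subst h <;> split_ifs <;> omega
  have hpd1 : ∀ c, 1 ≤ c → c ≤ ℓ → (1 ≤ gd c ∧ gd c ≤ ℓ) ∧ gd (gd c) = c := by
    intro c h1 h2
    refine ⟨hgd_rng c h1 h2, ?_⟩
    simp only [hgddef]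
    rcases hpδ12 with h|h <;> subst h <;> split_ifs <;> omega
  have hpd2 : ∀ j, 1 ≤ j → j ≤ ℓ → ∀ c, 1 ≤ c → c ≤ ℓ → gd j = c → j = gd c := by
    intro j hj1 hj2 c hc1 hc2 hgj
    simp only [hgddef] at hgj ⊢
    rcases hpδ12 with h|h <;> subst h <;> split_ifs at hgj ⊢ <;> omega
  have hwf : δ (vec ℓ Y0v) = vec ℓ Yfv :=
    rep ℓ δ gd gd sd Yfv Y0v hfd hgd_rng hpd1 hpd2 (fun c _ _ => by rw [hYfdef])
  -- coordinates of Yf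
  have hYf1 : Yfv 1 = u * Y0v pδ := by
    simp only [hYfdef, hgddef, hsddef]
    rcases hpδ12 with h|h <;> subst h <;> norm_num
  have hYf2 : Yfv 2 = u * Y0v (3 - pδ) := by
    simp only [hYfdef, hgddef, hsddef]
    rcases hpδ12 with h|h <;> subst h <;> norm_num
  have hYf3 : ∀ c, 3 ≤ c → Yfv c = Y0v c := by
    intro c hc
    have hgdc : gd c = c := by
      simp only [hgddef]
      rw [if_neg (show ¬ c = 1 by omega), if_neg (show ¬ c = 2 by omega)]
    have hsdc : sd c = 1 := by
      simp only [hsddef]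
      rw [if_neg (show ¬ c = 1 by omega), if_neg (show ¬ c = 2 by omega)]
    simp only [hYfdef]
    rw [hgdc, hsdc, one_mul]
  have hY01 : Y0v 1 = Pi * xv 1 := by rw [hY0def]; norm_num
  -- bound on generic coordinates of Y0
  have hY0bnd : ∀ c, 2 ≤ c → c ≤ ℓ → -(xv 2) ≤ Y0v c ∧ Y0v c ≤ xv 2 := by
    intro c h2 hcl
    obtain ⟨hb1, hb2, hb3, hb4⟩ := bs c h2 hcl
    simp only [hY0def]
    rw [if_neg (by omega)]
    by_cases hm : c = Ssum lam (blk lam k c - 1) + 2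
    · rw [if_pos hm]
      have h3 := hSb (blk lam k c) hb1 hb2
      have h4 := hSub (blk lam k c) hb2
      have hxle2 : xv (Ssum lam (blk lam k c) + 1) ≤ xv 2 := hanti 2 _ le_rfl (by omega) h4
      have hxp : 0 < xv (Ssum lam (blk lam k c) + 1) := hxpos2 _ (by omega)
      have he := heps' (blk lam k c) hb1 hb2
      constructor <;> nlinarith [he.1, he.2, hxle2, hxp, hx2pos]
    · rw [if_neg hm]
      obtain ⟨hbp, hc3⟩ := hbprev c h2 hcl hm
      have h5 : xv (c-1) ≤ xv 2 := hanti 2 (c-1) le_rfl (by omega) (by omega)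
      have h6 : 0 < xv (c-1) := hxpos2 _ (by omega)
      constructor <;> linarith
  -- the main generic inequality
  have hGEN : ∀ i, 2 ≤ i → i + 1 ≤ ℓ → q * xv (i+1) - Y0v (i+1) < q * xv i - Y0v i := by
    intro i h2i hi1
    obtain ⟨hb1, hb2, hb3, hb4⟩ := bs i h2i (by omega)
    have hxi : xv i = t ^ blk lam k i * (3/4:ℝ)^i := hxv i (by omega)
    by_cases hni : i = Ssum lam (blk lam k i) + 1
    · -- block boundary
      obtain ⟨hlt, hblk1, hS1'⟩ := hbdry i h2i hi1 hni
      have hxi1 : xv (i+1) = t ^ (blk lam k i + 1) * (3/4:ℝ)^(i+1) := by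
        rw [hxv (i+1) (by omega), hblk1]
      have hbn : blk lam k (Ssum lam (blk lam k i + 1) + 1) = blk lam k i + 1 :=
        hblk_n _ (by omega) hlt
      have hY0i1 : Y0v (i+1) = eps (blk lam k i + 1) * xv (Ssum lam (blk lam k i + 1) + 1) := by
        simp only [hY0def]
        rw [if_neg (by omega), hblk1, if_pos (by simp only [Nat.add_sub_cancel]; omega)]
      have hxn : xv (Ssum lam (blk lam k i + 1) + 1)
          = t ^ (blk lam k i + 1) * (3/4:ℝ)^(Ssum lam (blk lam k i + 1) + 1) := by
        rw [hxv _ (by omega), hbn]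
      have hle1 : i + 1 ≤ Ssum lam (blk lam k i + 1) + 1 := by omega
      have hpowle : (3/4:ℝ)^(Ssum lam (blk lam k i + 1) + 1) ≤ (3/4:ℝ)^(i+1) := hRle _ _ hle1
      have heps1 := heps' (blk lam k i + 1) (by omega) hlt
      have hZ : (0:ℝ) < t ^ blk lam k i * (3/4:ℝ)^i := mul_pos (pow_pos ht0 _) (hRpos i)
      have hZ1 : (0:ℝ) < t ^ (blk lam k i + 1) := pow_pos ht0 _
      -- lower bound on q * xv i - Y0v i
      have hyi : t ^ blk lam k i * (3/4:ℝ)^i * ((3/4)*q - 1) ≤ q * xv i - Y0v i := by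
        by_cases hmi : i = Ssum lam (blk lam k i - 1) + 2
        · have hY0i : Y0v i = eps (blk lam k i) * xv (Ssum lam (blk lam k i) + 1) := by
            simp only [hY0def]
            rw [if_neg (by omega), if_pos hmi]
          rw [← hni] at hY0i
          have he := heps' (blk lam k i) hb1 hb2
          rw [hY0i, hxi]
          nlinarith [mul_nonneg (by linarith [he.2] : (0:ℝ) ≤ 1 - eps (blk lam k i)) hZ.le,
            mul_nonneg (by linarith : (0:ℝ) ≤ q) hZ.le]
        · obtain ⟨hbp, hc3⟩ := hbprev i (by omega) (by omega) hmi
          have hY0i : Y0v i = xv (i - 1) := by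
            simp only [hY0def]
            rw [if_neg (by omega), if_neg hmi]
          have hxim : xv (i-1) = t ^ blk lam k i * (3/4:ℝ)^(i-1) := by
            rw [hxv _ (by omega), hbp]
          have hpow : (3/4:ℝ)^i = (3/4:ℝ)^(i-1) * (3/4) := by
            rw [← pow_succ]
            congr 1
            omega
          rw [hY0i, hxim, hxi, hpow]
          have hZ' : (0:ℝ) < t ^ blk lam k i * (3/4:ℝ)^(i-1) := mul_pos (pow_pos ht0 _) (hRpos _)
          nlinarith [mul_nonneg (by linarith : (0:ℝ) ≤ q - 2) hZ'.le, hZ'.le]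
      -- upper bound on q * xv (i+1) - Y0v (i+1)
      have hyiu : q * xv (i+1) - Y0v (i+1) ≤ (q+1) * (t ^ (blk lam k i + 1) * (3/4:ℝ)^(i+1)) := by
        rw [hxi1, hY0i1, hxn]
        have h1 : t ^ (blk lam k i + 1) * (3/4:ℝ)^(Ssum lam (blk lam k i + 1) + 1)
            ≤ t ^ (blk lam k i + 1) * (3/4:ℝ)^(i+1) :=
          mul_le_mul_of_nonneg_left hpowle hZ1.le
        nlinarith [mul_nonneg (by linarith [heps1.1] : (0:ℝ) ≤ 1 + eps (blk lam k i + 1))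
          (mul_nonneg hZ1.le (hRpos (Ssum lam (blk lam k i + 1) + 1)).le), h1]
      have hpows : t ^ (blk lam k i + 1) * (3/4:ℝ)^(i+1)
          = (t * (3/4)) * (t ^ blk lam k i * (3/4:ℝ)^i) := by
        rw [pow_succ, pow_succ]
        ring
      calc q * xv (i+1) - Y0v (i+1) ≤ (q+1) * (t ^ (blk lam k i + 1) * (3/4:ℝ)^(i+1)) := hyiu
        _ = ((q+1) * (t * (3/4))) * (t ^ blk lam k i * (3/4:ℝ)^i) := by rw [hpows]; ring
        _ < ((3/4)*q - 1) * (t ^ blk lam k i * (3/4:ℝ)^i) := by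
            apply mul_lt_mul_of_pos_right _ hZ
            linarith [hK1]
        _ = t ^ blk lam k i * (3/4:ℝ)^i * ((3/4)*q - 1) := by ring
        _ ≤ q * xv i - Y0v i := hyi
    · -- within a block
      have hblk1 : blk lam k (i+1) = blk lam k i := hsame i h2i hi1 hni
      have hxi1 : xv (i+1) = t ^ blk lam k i * (3/4:ℝ)^(i+1) := by
        rw [hxv (i+1) (by omega), hblk1]
      have hY0i1 : Y0v (i+1) = xv i := by
        simp only [hY0def]
        rw [if_neg (by omega), hblk1, if_neg (by omega)]
        simp only [Nat.add_sub_cancel]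
      have hpow : (3/4:ℝ)^(i+1) = (3/4:ℝ)^i * (3/4) := pow_succ _ _
      have hZ : (0:ℝ) < t ^ blk lam k i * (3/4:ℝ)^i := mul_pos (pow_pos ht0 _) (hRpos i)
      by_cases hmi : i = Ssum lam (blk lam k i - 1) + 2
      · have hY0i : Y0v i = eps (blk lam k i) * xv (Ssum lam (blk lam k i) + 1) := by
          simp only [hY0def]
          rw [if_neg (by omega), if_pos hmi]
        have hbn : blk lam k (Ssum lam (blk lam k i) + 1) = blk lam k i := hblk_n _ hb1 hb2
        have h3 := hSb (blk lam k i) hb1 hb2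
        have hxn : xv (Ssum lam (blk lam k i) + 1)
            = t ^ blk lam k i * (3/4:ℝ)^(Ssum lam (blk lam k i) + 1) := by
          rw [hxv _ (by omega), hbn]
        have hpowle : (3/4:ℝ)^(Ssum lam (blk lam k i) + 1) ≤ (3/4:ℝ)^(i+1) := hRle _ _ (by omega)
        have he := heps' (blk lam k i) hb1 hb2
        have h1 : eps (blk lam k i) * xv (Ssum lam (blk lam k i) + 1)
            ≤ t ^ blk lam k i * (3/4:ℝ)^(i+1) := by
          rw [hxn]
          calc eps (blk lam k i) * (t ^ blk lam k i * (3/4:ℝ)^(Ssum lam (blk lam k i) + 1))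
              ≤ 1 * (t ^ blk lam k i * (3/4:ℝ)^(Ssum lam (blk lam k i) + 1)) := by
                apply mul_le_mul_of_nonneg_right he.2 (mul_pos (pow_pos ht0 _) (hRpos _)).le
            _ = t ^ blk lam k i * (3/4:ℝ)^(Ssum lam (blk lam k i) + 1) := one_mul _
            _ ≤ t ^ blk lam k i * (3/4:ℝ)^(i+1) := by
                apply mul_le_mul_of_nonneg_left hpowle (pow_pos ht0 _).le
        rw [hpow] at h1
        rw [hY0i, hY0i1, hxi, hxi1, hpow]
        nlinarith [h1, hZ, mul_nonneg (by linarith : (0:ℝ) ≤ q - 2) hZ.le]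
      · obtain ⟨hbp, hc3⟩ := hbprev i (by omega) (by omega) hmi
        have hY0i : Y0v i = xv (i - 1) := by
          simp only [hY0def]
          rw [if_neg (by omega), if_neg hmi]
        have hxim : xv (i-1) = t ^ blk lam k i * (3/4:ℝ)^(i-1) := by
          rw [hxv _ (by omega), hbp]
        have hpow2 : (3/4:ℝ)^i = (3/4:ℝ)^(i-1) * (3/4) := by
          rw [← pow_succ]
          congr 1
          omega
        have hZ' : (0:ℝ) < t ^ blk lam k i * (3/4:ℝ)^(i-1) := mul_pos (pow_pos ht0 _) (hRpos _)
        rw [hY0i, hY0i1, hxi, hxi1, hpow, hpow2]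
        nlinarith [mul_nonneg (by linarith : (0:ℝ) ≤ q - 2) hZ'.le, hZ'.le]
  -- assemble the inner products
  have hfullred : q • vec ℓ xv - δ (wle (vec ℓ xv)) = vec ℓ (fun j => q * xv j - Yfv j) := by
    rw [hw0, hwf]
    ext i
    rfl
  have hip : ∀ a, 1 ≤ a → a ≤ ℓ →
      ⟪vec ℓ (fun j => q * xv j - Yfv j), E ℓ a⟫ = q * xv a - Yfv a :=
    fun a h1 h2 => inner_vec_E ℓ a h1 h2 (fun j => q * xv j - Yfv j)
  refine ⟨xv, ?_, ?_, ?_, ?_⟩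
  · -- decreasing
    intro j h1 hjl
    by_cases hj : j = 1
    · subst hj
      show xv 2 < xv 1
      rw [hx2v, hx1v]
      by_cases h : pδ = 2 ∧ u * Pi = 1
      · rw [hX1sp h]
        nlinarith [ht0, hq0]
      · rw [hX1ns h]
        nlinarith [ht0, mul_nonneg (by linarith : (0:ℝ) ≤ q - 2) ht0.le]
    · exact hstep j (by omega) (by omega)
  · exact hxpos2 ℓ hℓ2
  · -- ⟨qx - wx, e1 + e2⟩ > 0
    rw [hfullred, inner_add_right, hip 1 le_rfl (by omega), hip 2 (by omega) hℓ2]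
    have h2bnd := hY0bnd 2 le_rfl hℓ2
    rcases hpδ12 with hpv|hpv
    · -- δ = id
      have huv : u = 1 := hu1of hpv
      rw [hYf1, hYf2, hpv, huv]
      norm_num
      -- goal: 0 < q * xv 1 - Y0v 1 + (q * xv 2 - Y0v 2)
      rw [hY01, hx1v]
      have hPle : Pi * X1 ≤ X1 := by
        rcases hPi1 with h|h <;> rw [h] <;> nlinarith [hX1pos]
      nlinarith [hPle, h2bnd.2, hX1pos, hx2pos, mul_pos (show (0:ℝ) < q - 1 by linarith) hX1pos,
        mul_pos (show (0:ℝ) < q - 1 by linarith) hx2pos]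
    · -- δ swaps 1 and 2
      rw [hYf1, hYf2, hpv]
      norm_num
      -- goal: 0 < q * xv 1 - u * Y0v 2 + (q * xv 2 - u * Y0v 1)
      rw [hY01, hx1v]
      have huY : -(xv 2) ≤ u * Y0v 2 ∧ u * Y0v 2 ≤ xv 2 := by
        rcases hu1 with h|h <;> rw [h] <;> constructor <;> linarith [h2bnd.1, h2bnd.2]
      rcases hsp12 with hsp|hsp
      · have hPx : u * (Pi * X1) = X1 := by
          rw [← mul_assoc, hsp, one_mul]
        rw [hPx]
        nlinarith [huY.2, hX1pos, hx2pos, mul_pos (show (0:ℝ) < q - 1 by linarith) hX1pos,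
          mul_pos (show (0:ℝ) < q - 1 by linarith) hx2pos]
      · have hPx : u * (Pi * X1) = -X1 := by
          rw [← mul_assoc, hsp]
          ring
        rw [hPx]
        nlinarith [huY.2, hX1pos, hx2pos, mul_pos hq0 hX1pos,
          mul_pos (show (0:ℝ) < q - 1 by linarith) hx2pos]
  · -- simple roots e_i - e_{i+1}
    intro i h1 hi1
    rw [hfullred, inner_sub_right, hip i h1 (by omega), hip (i+1) (by omega) hi1]
    rcases Nat.lt_or_ge i 3 with hlt | hge
    · have hi12 : i = 1 ∨ i = 2 := by omega
      rcases hi12 with hiv | hiv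
      · -- i = 1
        subst hiv
        have h2bnd := hY0bnd 2 le_rfl hℓ2
        rcases hpδ12 with hpv|hpv
        · have huv : u = 1 := hu1of hpv
          rw [hYf1, hYf2, hpv, huv]
          norm_num
          rw [hY01, hx1v, hx2v, hX1ns (by rw [hpv]; simp)]
          have hPle : Pi * X1 ≤ X1 := by
            rcases hPi1 with h|h <;> rw [h] <;> nlinarith [hX1pos]
          rw [hX1ns (by rw [hpv]; simp)] at hPle
          nlinarith [hPle, h2bnd.1, ht0, hx2v, mul_nonneg (mul_nonneg (show (0:ℝ) ≤ q - 2 by linarith)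
            (show (0:ℝ) ≤ q by linarith)) ht0.le,
            mul_nonneg (show (0:ℝ) ≤ q - 2 by linarith) ht0.le]
        · rw [hYf1, hYf2, hpv]
          norm_num
          rw [hY01, hx1v]
          have huY : -(xv 2) ≤ u * Y0v 2 ∧ u * Y0v 2 ≤ xv 2 := by
            rcases hu1 with h|h <;> rw [h] <;> constructor <;> linarith [h2bnd.1, h2bnd.2]
          rcases hsp12 with hsp|hsp
          · have hPx : u * (Pi * X1) = X1 := by rw [← mul_assoc, hsp, one_mul]
            rw [hPx, hX1sp ⟨hpv, hsp⟩, hx2v]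
            nlinarith [huY.2, ht0, hq0, hx2v, mul_pos hq0 ht0, mul_pos (mul_pos hq0 hq0) ht0]
          · have hPx : u * (Pi * X1) = -X1 := by rw [← mul_assoc, hsp]; ring
            rw [hPx, hX1ns (by rintro ⟨-, h⟩; rw [h] at hsp; norm_num at hsp), hx2v]
            nlinarith [huY.2, ht0, hx2v, mul_nonneg (mul_nonneg (show (0:ℝ) ≤ q - 2 by linarith)
              (show (0:ℝ) ≤ q by linarith)) ht0.le,
              mul_nonneg (show (0:ℝ) ≤ q - 2 by linarith) ht0.le]
      · -- i = 2
        subst hiv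
        have h3ℓ : 3 ≤ ℓ := by omega
        rw [hYf3 3 le_rfl]
        rcases hpδ12 with hpv|hpv
        · have huv : u = 1 := hu1of hpv
          rw [hYf2, hpv, huv]
          norm_num
          linarith [hGEN 2 le_rfl h3ℓ]
        · rw [hYf2, hpv]
          norm_num
          rw [hY01, hx1v]
          rcases hsp12 with hsp|hsp
          · have hPx : u * (Pi * X1) = X1 := by rw [← mul_assoc, hsp, one_mul]
            rw [hPx, hX1sp ⟨hpv, hsp⟩, hx2v]
            -- need: q * xv 3 - Y0v 3 < q * (t * (9/16)) - (1+q/8) * (t * (9/16))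
            by_cases h31 : 3 ≤ Ssum lam 1 + 1
            · -- first block has length ≥ 2
              have hblk3 : blk lam k 3 = 1 :=
                be 3 (by omega) h3ℓ 1 le_rfl hk (by simp [hS0]) (by omega)
              have hY03 : Y0v 3 = xv 2 := by
                simp only [hY0def]
                rw [if_neg (by omega), hblk3]
                rw [if_neg (by simp [hS0])]
              have hx3 : xv 3 = t * (27/64) := by
                rw [hxv 3 (by omega), hblk3, pow_one]
                norm_num
              rw [hY03, hx3, hx2v]
              nlinarith [mul_pos hq0 ht0, ht0]
            · -- first block has length 1
              have hS1v : Ssum lam 1 = 1 := by omega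
              have hk2 : 2 ≤ k := by
                by_contra h
                have : k = 1 := by omega
                rw [this] at hsum'
                omega
              have hS2 : Ssum lam 1 + 1 ≤ Ssum lam 2 := by
                have := hSb 2 (by omega) hk2
                simpa using this
              have hblk3 : blk lam k 3 = 2 := by
                refine be 3 (by omega) h3ℓ 2 (by omega) hk2 ?_ (by omega)
                simp only [show (2:ℕ) - 1 = 1 from rfl, hS1v]
                omega
              have hY03 : Y0v 3 = eps 2 * xv (Ssum lam 2 + 1) := by
                simp only [hY0def]
                rw [if_neg (by omega), hblk3,
                  if_pos (by simp only [show (2:ℕ) - 1 = 1 from rfl, hS1v])]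
              have hx3 : xv 3 = t^2 * (27/64) := by
                rw [hxv 3 (by omega), hblk3]
                norm_num
              have hbn2 : blk lam k (Ssum lam 2 + 1) = 2 := hblk_n 2 (by omega) hk2
              have hxn2 : xv (Ssum lam 2 + 1) = t^2 * (3/4:ℝ)^(Ssum lam 2 + 1) := by
                rw [hxv _ (by omega), hbn2]
              have hpl : (3/4:ℝ)^(Ssum lam 2 + 1) ≤ (3/4:ℝ)^3 := hRle 3 _ (by omega)
              have he2 := heps' 2 (by omega) hk2
              have ht2 : (0:ℝ) < t^2 := pow_pos ht0 2
              have hb3 : eps 2 * xv (Ssum lam 2 + 1) ≥ -(t^2 * (27/64)) := by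
                rw [hxn2]
                have hxp : (0:ℝ) < t^2 * (3/4:ℝ)^(Ssum lam 2 + 1) := mul_pos ht2 (hRpos _)
                have h4 : t^2 * (3/4:ℝ)^(Ssum lam 2 + 1) ≤ t^2 * (27/64) := by
                  calc t^2 * (3/4:ℝ)^(Ssum lam 2 + 1) ≤ t^2 * (3/4:ℝ)^3 :=
                        mul_le_mul_of_nonneg_left hpl ht2.le
                    _ = t^2 * (27/64) := by norm_num
                nlinarith [he2.1, hxp, h4]
              rw [hY03, hx3]
              have hqt2 : t*((q+1)*t) ≤ t*(1/4) := mul_le_mul_of_nonneg_left hKmain ht0.le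
              nlinarith [hb3, hqt2, ht0, mul_nonneg (show (0:ℝ) ≤ q - 2 by linarith) ht0.le,
                mul_nonneg (mul_nonneg (show (0:ℝ) ≤ q - 2 by linarith) ht0.le) ht0.le]
          · have hPx : u * (Pi * X1) = -X1 := by rw [← mul_assoc, hsp]; ring
            rw [hPx, hX1ns (by rintro ⟨-, h⟩; rw [h] at hsp; norm_num at hsp), hx2v]
            have h3bnd := hY0bnd 3 (by omega) h3ℓ
            have hx32 : xv 3 ≤ xv 2 := hanti 2 3 le_rfl (by omega) h3ℓ
            rw [hx2v] at h3bnd hx32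
            nlinarith [h3bnd.1, hx32, ht0, hq0, mul_nonneg hq0.le ht0.le,
              mul_nonneg (show (0:ℝ) ≤ q - 2 by linarith) ht0.le]
    · -- i ≥ 3
      rw [hYf3 i hge, hYf3 (i+1) (by omega)]
      linarith [hGEN i (by omega) hi1]
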